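/- Let π be a permutation on {0,…,n−1}, let P = {0} ∪ {i : 0 < i ≤ n−1, π(i) ≠ π(i−1)+1}, and Q = {π(i) : i ∈ P}. For any integer d ≥ 2, there exists a set P′ with P ⊆ P′ ⊆ {0,…,n−1}, with Q′ = {π(i) : i ∈ P′}, such that: (1) for any q, q′ ∈ Q′ where q is the predecessor of q′ in Q′ (i.e., q < q′ and no element of Q′ lies strictly between them), |[q, q′) ∩ P′| < 2d; and (2) |P′| ≤ d·|P|/(d−1). -/
import Mathlib


/-- The index `i - 1` (natural-number subtraction) as an element of `Fin n`. -/
def finPred {n : ℕ} (i : Fin n) : Fin n :=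
  ⟨i.val - 1, Nat.lt_of_le_of_lt (Nat.sub_le _ _) i.isLt⟩

/-- The set of subsequence heads of a permutation `π`:
`{0} ∪ {i : 0 < i ≤ n−1, π(i) ≠ π(i−1)+1}` (value arithmetic over ℕ). -/
def headSet {n : ℕ} (π : Equiv.Perm (Fin n)) : Finset (Fin n) :=
  Finset.univ.filter (fun i => i.val = 0 ∨ (π i).val ≠ (π (finPred i)).val + 1)

namespace Stmt0Aux

variable {n : ℕ}

/-- The interval of points `x ≥ a` below every element of `A` exceeding `a`. -/
def ivl (A : Finset (Fin n)) (a : Fin n) : Finset (Fin n) :=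
  Finset.univ.filter (fun x => a ≤ x ∧ ∀ b ∈ A, b ≤ a ∨ x < b)

lemma mem_ivl {A : Finset (Fin n)} {a x : Fin n} :
    x ∈ ivl A a ↔ a ≤ x ∧ ∀ b ∈ A, b ≤ a ∨ x < b := by
  simp [ivl]

lemma ivl_disjoint {A : Finset (Fin n)} {a₁ a₂ : Fin n}
    (h1 : a₁ ∈ A) (h2 : a₂ ∈ A) (hne : a₁ ≠ a₂) :
    Disjoint (ivl A a₁) (ivl A a₂) := by
  wlog hlt : a₁ < a₂ generalizing a₁ a₂
  · exact (this h2 h1 hne.symm (lt_of_le_of_ne (not_lt.mp hlt) hne.symm)).symm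
  rw [Finset.disjoint_left]
  intro x hx1 hx2
  rw [mem_ivl] at hx1 hx2
  rcases hx1.2 a₂ h2 with h | h
  · exact absurd (lt_of_lt_of_le hlt h) (lt_irrefl a₁)
  · exact absurd (lt_of_lt_of_le h hx2.1) (lt_irrefl x)

/-- The weight of `a`: number of elements of `π⁻¹(A)` in the interval of `a`. -/
def wgt (π : Equiv.Perm (Fin n)) (A : Finset (Fin n)) (a : Fin n) : ℕ :=
  ((A.image π.symm) ∩ ivl A a).card

/-- The potential function. -/
def phi (π : Equiv.Perm (Fin n)) (d : ℕ) (A : Finset (Fin n)) : ℕ :=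
  ∑ a ∈ A, (wgt π A a - d)

lemma phi_le_card (π : Equiv.Perm (Fin n)) (d : ℕ) (A : Finset (Fin n)) :
    phi π d A ≤ A.card := by
  have h1 : phi π d A ≤ ∑ a ∈ A, wgt π A a :=
    Finset.sum_le_sum (fun a _ => Nat.sub_le _ _)
  have h2 : ∑ a ∈ A, wgt π A a = (A.biUnion (fun a => (A.image π.symm) ∩ ivl A a)).card := by
    refine (Finset.card_biUnion ?_).symm
    intro a₁ h1 a₂ h2 hne
    exact Finset.disjoint_of_subset_left (Finset.inter_subset_right)
      (Finset.disjoint_of_subset_right (Finset.inter_subset_right) (ivl_disjoint h1 h2 hne))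
  have h3 : (A.biUnion (fun a => (A.image π.symm) ∩ ivl A a)).card ≤ (A.image π.symm).card := by
    apply Finset.card_le_card
    intro x hx
    rw [Finset.mem_biUnion] at hx
    obtain ⟨a, _, hx⟩ := hx
    exact Finset.mem_of_mem_inter_left hx
  have h4 : (A.image π.symm).card = A.card :=
    Finset.card_image_of_injective _ π.symm.injective
  omega

lemma ivl_eq_of_conspair {A : Finset (Fin n)} {q q' : Fin n}
    (hq' : q' ∈ A) (hlt : q < q')
    (hbet : ∀ x ∈ A, ¬(q < x ∧ x < q')) :
    ivl A q = Finset.univ.filter (fun x => q ≤ x ∧ x < q') := by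
  ext x
  rw [mem_ivl, Finset.mem_filter]
  constructor
  · rintro ⟨hqx, hall⟩
    refine ⟨Finset.mem_univ _, hqx, ?_⟩
    rcases hall q' hq' with h | h
    · exact absurd (lt_of_lt_of_le hlt h) (lt_irrefl q)
    · exact h
  · rintro ⟨-, hqx, hxq'⟩
    refine ⟨hqx, fun b hb => ?_⟩
    by_cases hbq : b ≤ q
    · exact Or.inl hbq
    · right
      have hqb : q < b := not_le.mp hbq
      have : ¬ b < q' := fun hc => hbet b hb ⟨hqb, hc⟩
      exact lt_of_lt_of_le hxq' (not_lt.mp this)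

lemma exists_nth : ∀ (m : ℕ) (T : Finset (Fin n)), m < T.card →
    ∃ v ∈ T, (T.filter (fun x => x < v)).card = m := by
  intro m
  induction m with
  | zero =>
    intro T hT
    have hne : T.Nonempty := Finset.card_pos.mp hT
    refine ⟨T.min' hne, T.min'_mem hne, ?_⟩
    rw [Finset.card_eq_zero, Finset.filter_eq_empty_iff]
    intro x hx
    exact not_lt.mpr (T.min'_le x hx)
  | succ m ih =>
    intro T hT
    have hne : T.Nonempty := Finset.card_pos.mp (by omega)
    set a := T.min' hne with ha
    have haT : a ∈ T := T.min'_mem hne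
    have hcard : m < (T.erase a).card := by
      rw [Finset.card_erase_of_mem haT]; omega
    obtain ⟨v, hv, hvc⟩ := ih (T.erase a) hcard
    have hvT : v ∈ T := Finset.mem_of_mem_erase hv
    have hav : a < v := lt_of_le_of_ne (T.min'_le v hvT) (Ne.symm (Finset.ne_of_mem_erase hv))
    refine ⟨v, hvT, ?_⟩
    have heq : T.filter (fun x => x < v) = insert a ((T.erase a).filter (fun x => x < v)) := by
      ext x
      simp only [Finset.mem_filter, Finset.mem_insert, Finset.mem_erase]
      constructor
      · rintro ⟨hxT, hxv⟩
        by_cases hxa : x = a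
        · exact Or.inl hxa
        · exact Or.inr ⟨⟨hxa, hxT⟩, hxv⟩
      · rintro (rfl | ⟨⟨_, hxT⟩, hxv⟩)
        · exact ⟨haT, hav⟩
        · exact ⟨hxT, hxv⟩
    rw [heq, Finset.card_insert_of_notMem, hvc]
    simp

/-- The key step: if a consecutive pair has a heavy interval, a point can be
inserted which decreases the potential by at least `d - 1`. -/
lemma step (π : Equiv.Perm (Fin n)) (d : ℕ) (hd : 2 ≤ d) {A : Finset (Fin n)} {q q' : Fin n}
    (hq : q ∈ A) (hq' : q' ∈ A) (hlt : q < q')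
    (hbet : ∀ x ∈ A, ¬(q < x ∧ x < q'))
    (hcnt : 2 * d ≤ ((A.image π.symm).filter (fun x => q ≤ x ∧ x < q')).card) :
    ∃ v, v ∉ A ∧ phi π d (insert v A) + (d - 1) ≤ phi π d A := by
  classical
  set P : Finset (Fin n) := A.image π.symm with hP
  set S : Finset (Fin n) := P.filter (fun x => q ≤ x ∧ x < q') with hS
  obtain ⟨v, hvS, hvc⟩ := exists_nth d S (by omega)
  have hvP : v ∈ P := (Finset.mem_filter.mp hvS).1
  have hqv' : q ≤ v ∧ v < q' := (Finset.mem_filter.mp hvS).2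
  have hqv : q < v := by
    -- there are d ≥ 2 elements of S below v, each ≥ q
    have hpos : 0 < (S.filter (fun x => x < v)).card := by omega
    obtain ⟨x, hx⟩ := Finset.card_pos.mp hpos
    rw [Finset.mem_filter] at hx
    have : q ≤ x := (Finset.mem_filter.mp hx.1).2.1
    exact lt_of_le_of_lt this hx.2
  have hvA : v ∉ A := fun hvA => hbet v hvA ⟨hqv, hqv'.2⟩
  refine ⟨v, hvA, ?_⟩
  set A' : Finset (Fin n) := insert v A with hA'
  set j : Fin n := π.symm v with hj
  have hP' : A'.image π.symm = insert j P := by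
    rw [hA', Finset.image_insert]
  have hjP : j ∉ P := by
    intro hc
    rw [hP, Finset.mem_image] at hc
    obtain ⟨b, hb, hbe⟩ := hc
    have : b = v := π.symm.injective hbe
    exact hvA (this ▸ hb)
  -- interval facts
  have hbet' : ∀ x ∈ A', ¬(q < x ∧ x < v) := by
    intro x hx ⟨h1, h2⟩
    rcases Finset.mem_insert.mp hx with rfl | hx
    · exact lt_irrefl x h2
    · exact hbet x hx ⟨h1, lt_trans h2 hqv'.2⟩
  have hbet'' : ∀ x ∈ A', ¬(v < x ∧ x < q') := by
    intro x hx ⟨h1, h2⟩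
    rcases Finset.mem_insert.mp hx with rfl | hx
    · exact lt_irrefl x h1
    · exact hbet x hx ⟨lt_trans hqv h1, h2⟩
  have hvA' : v ∈ A' := Finset.mem_insert_self _ _
  have hqA' : q ∈ A' := Finset.mem_insert_of_mem hq
  have hq'A' : q' ∈ A' := Finset.mem_insert_of_mem hq'
  have hivlq : ivl A' q = Finset.univ.filter (fun x => q ≤ x ∧ x < v) :=
    ivl_eq_of_conspair hvA' hqv hbet'
  have hivlv : ivl A' v = Finset.univ.filter (fun x => v ≤ x ∧ x < q') :=
    ivl_eq_of_conspair hq'A' hqv'.2 hbet''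
  have hivlA : ivl A q = Finset.univ.filter (fun x => q ≤ x ∧ x < q') :=
    ivl_eq_of_conspair hq' hlt hbet
  -- intervals of other points are unchanged
  have hsame : ∀ a ∈ A, a ≠ q → ivl A' a = ivl A a := by
    intro a haA hane
    ext x
    rw [mem_ivl, mem_ivl]
    constructor
    · rintro ⟨h1, h2⟩
      exact ⟨h1, fun b hb => h2 b (Finset.mem_insert_of_mem hb)⟩
    · rintro ⟨h1, h2⟩
      refine ⟨h1, fun b hb => ?_⟩
      rcases Finset.mem_insert.mp hb with rfl | hb
      swap
      · exact h2 b hb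
      -- b = v : show v ≤ a ∨ x < v
      rcases lt_or_ge a b with hav | hva
      swap
      · exact Or.inl hva
      -- a < v; then a < q (since a ∈ A, a ≤ q' region); so x < q < v
      have haq : a < q := by
        rcases lt_trichotomy a q with h | h | h
        · exact h
        · exact absurd h hane
        · exact absurd ⟨h, lt_trans hav hqv'.2⟩ (hbet a haA)
      rcases h2 q hq with h | h
      · exact absurd (lt_of_le_of_lt h haq) (lt_irrefl q)
      · exact Or.inr (lt_trans h hqv)
  -- counting: S.filter (x < v) is P ∩ ivl A' q
  have hwq : (P ∩ ivl A' q).card = d := by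
    rw [← hvc]
    congr 1
    ext x
    rw [Finset.mem_inter, hivlq, Finset.mem_filter, Finset.mem_filter, hS, Finset.mem_filter]
    constructor
    · rintro ⟨hxP, -, hqx, hxv⟩
      exact ⟨⟨hxP, hqx, lt_trans hxv hqv'.2⟩, hxv⟩
    · rintro ⟨⟨hxP, hqx, -⟩, hxv⟩
      exact ⟨hxP, Finset.mem_univ _, hqx, hxv⟩
  -- counting: the q-interval of A splits
  have hsplit : (P ∩ ivl A q).card = d + (P ∩ ivl A' v).card := by
    have hd1 : P ∩ ivl A q = (P ∩ ivl A' q) ∪ (P ∩ ivl A' v) := by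
      ext x
      rw [Finset.mem_union, Finset.mem_inter, Finset.mem_inter, Finset.mem_inter,
        hivlq, hivlv, hivlA, Finset.mem_filter, Finset.mem_filter, Finset.mem_filter]
      constructor
      · rintro ⟨hxP, -, hqx, hxq'⟩
        rcases lt_or_ge x v with h | h
        · exact Or.inl ⟨hxP, Finset.mem_univ _, hqx, h⟩
        · exact Or.inr ⟨hxP, Finset.mem_univ _, h, hxq'⟩
      · rintro (⟨hxP, -, hqx, hxv⟩ | ⟨hxP, -, hvx, hxq'⟩)
        · exact ⟨hxP, Finset.mem_univ _, hqx, lt_trans hxv hqv'.2⟩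
        · exact ⟨hxP, Finset.mem_univ _, le_trans hqv'.1 hvx, hxq'⟩
    have hd2 : Disjoint (P ∩ ivl A' q) (P ∩ ivl A' v) := by
      apply Finset.disjoint_of_subset_left Finset.inter_subset_right
      apply Finset.disjoint_of_subset_right Finset.inter_subset_right
      exact ivl_disjoint hqA' hvA' (ne_of_lt hqv)
    rw [hd1, Finset.card_union_of_disjoint hd2, hwq]
  -- weights with the new point j added
  have hwgt_le : ∀ a, wgt π A' a ≤ (P ∩ ivl A' a).card + (if j ∈ ivl A' a then 1 else 0) := by
    intro a
    rw [wgt, hP']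
    split_ifs with h
    · have hsub : insert j P ∩ ivl A' a ⊆ insert j (P ∩ ivl A' a) := by
        intro x hx
        rw [Finset.mem_inter, Finset.mem_insert] at hx
        rcases hx.1 with rfl | hxP
        · exact Finset.mem_insert_self _ _
        · exact Finset.mem_insert_of_mem (Finset.mem_inter.mpr ⟨hxP, hx.2⟩)
      calc (insert j P ∩ ivl A' a).card ≤ (insert j (P ∩ ivl A' a)).card :=
            Finset.card_le_card hsub
        _ ≤ (P ∩ ivl A' a).card + 1 := Finset.card_insert_le _ _
    · have heq : insert j P ∩ ivl A' a = P ∩ ivl A' a := by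
        ext x
        rw [Finset.mem_inter, Finset.mem_inter, Finset.mem_insert]
        constructor
        · rintro ⟨rfl | hxP, hxi⟩
          · exact absurd hxi h
          · exact ⟨hxP, hxi⟩
        · rintro ⟨hxP, hxi⟩
          exact ⟨Or.inr hxP, hxi⟩
      rw [heq]
      omega
  -- the indicator sums to at most 1
  have hind : ∑ a ∈ A', (if j ∈ ivl A' a then 1 else 0) ≤ 1 := by
    have hcf : ∑ a ∈ A', (if j ∈ ivl A' a then 1 else 0)
        = (A'.filter (fun a => j ∈ ivl A' a)).card := by
      rw [Finset.card_filter]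
    rw [hcf, Finset.card_le_one]
    intro a₁ h1 a₂ h2
    rw [Finset.mem_filter] at h1 h2
    by_contra hne
    exact Finset.disjoint_left.mp (ivl_disjoint h1.1 h2.1 hne) h1.2 h2.2
  -- now put it all together
  have hterm : ∀ a ∈ A', wgt π A' a - d ≤
      ((P ∩ ivl A' a).card - d) + (if j ∈ ivl A' a then 1 else 0) := by
    intro a _
    have := hwgt_le a
    omega
  have hphi1 : phi π d A' ≤
      (∑ a ∈ A', ((P ∩ ivl A' a).card - d)) + 1 := by
    calc phi π d A' ≤ ∑ a ∈ A', (((P ∩ ivl A' a).card - d) + (if j ∈ ivl A' a then 1 else 0)) :=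
          Finset.sum_le_sum hterm
      _ = (∑ a ∈ A', ((P ∩ ivl A' a).card - d)) + ∑ a ∈ A', (if j ∈ ivl A' a then 1 else 0) :=
          Finset.sum_add_distrib
      _ ≤ _ := by omega
  have hsum1 : ∑ a ∈ A', ((P ∩ ivl A' a).card - d)
      = ((P ∩ ivl A' v).card - d) + ∑ a ∈ A, ((P ∩ ivl A' a).card - d) :=
    Finset.sum_insert hvA
  have hsum2 : ∑ a ∈ A, ((P ∩ ivl A' a).card - d)
      = ((P ∩ ivl A' q).card - d) + ∑ a ∈ A.erase q, ((P ∩ ivl A' a).card - d) :=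
    (Finset.add_sum_erase A _ hq).symm
  have hsum3 : ∑ a ∈ A.erase q, ((P ∩ ivl A' a).card - d)
      = ∑ a ∈ A.erase q, (wgt π A a - d) := by
    apply Finset.sum_congr rfl
    intro a ha
    rw [hsame a (Finset.mem_of_mem_erase ha) (Finset.ne_of_mem_erase ha)]
    rfl
  have hphiA : phi π d A = (wgt π A q - d) + ∑ a ∈ A.erase q, (wgt π A a - d) :=
    (Finset.add_sum_erase A _ hq).symm
  have hwAq : wgt π A q = d + (P ∩ ivl A' v).card := by
    rw [wgt]; exact hsplit
  have hScard : (P ∩ ivl A q).card = S.card := by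
    congr 1
    rw [hivlA, hS]
    ext x
    simp only [Finset.mem_inter, Finset.mem_filter, Finset.mem_univ, true_and]
  have hcv : d ≤ (P ∩ ivl A' v).card := by
    have : 2 * d ≤ (P ∩ ivl A q).card := by rw [hScard]; exact hcnt
    omega
  omega

/-- Main recursion. -/
lemma recMain (π : Equiv.Perm (Fin n)) (d : ℕ) (hd : 2 ≤ d) :
    ∀ k : ℕ, ∀ A : Finset (Fin n), phi π d A ≤ k →
    ∃ B : Finset (Fin n), A ⊆ B ∧
      (∀ q q' : Fin n, q ∈ B → q' ∈ B → q < q' →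
        (∀ x ∈ B, ¬(q < x ∧ x < q')) →
        ((B.image π.symm).filter (fun x => q ≤ x ∧ x < q')).card < 2 * d) ∧
      (B.card : ℚ) ≤ (A.card : ℚ) + (k : ℚ) / ((d : ℚ) - 1) := by
  intro k
  induction k using Nat.strong_induction_on with
  | _ k ih =>
    intro A hA
    by_cases hgood : ∀ q q' : Fin n, q ∈ A → q' ∈ A → q < q' →
        (∀ x ∈ A, ¬(q < x ∧ x < q')) →
        ((A.image π.symm).filter (fun x => q ≤ x ∧ x < q')).card < 2 * d
    · refine ⟨A, Finset.Subset.refl A, hgood, ?_⟩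
      have h1 : (0:ℚ) ≤ (k : ℚ) / ((d : ℚ) - 1) := by
        apply div_nonneg (Nat.cast_nonneg k)
        have : (2:ℚ) ≤ (d:ℚ) := by exact_mod_cast hd
        linarith
      linarith
    · push_neg at hgood
      obtain ⟨q, q', hq, hq', hlt, hbet, hcnt⟩ := hgood
      have hbet2 : ∀ x ∈ A, ¬(q < x ∧ x < q') :=
        fun x hx h => absurd h.2 (not_lt.mpr (hbet x hx h.1))
      obtain ⟨v, hvA, hstep⟩ := step π d hd hq hq' hlt hbet2 hcnt
      -- phi A is at least d
      have hphiA : d ≤ phi π d A := by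
        have hterm : wgt π A q - d ≤ phi π d A :=
          Finset.single_le_sum (f := fun a => wgt π A a - d) (fun a _ => Nat.zero_le _) hq
        have hwAq : 2 * d ≤ wgt π A q := by
          rw [wgt, ivl_eq_of_conspair hq' hlt hbet2]
          have : (A.image π.symm) ∩ Finset.univ.filter (fun x => q ≤ x ∧ x < q')
              = (A.image π.symm).filter (fun x => q ≤ x ∧ x < q') := by
            ext x
            simp only [Finset.mem_inter, Finset.mem_filter, Finset.mem_univ, true_and]
          rw [this]
          exact hcnt
        omega
      have hk : d ≤ k := le_trans hphiA hA
      have hlt' : k - (d - 1) < k := by omega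
      have hphi' : phi π d (insert v A) ≤ k - (d - 1) := by omega
      obtain ⟨B, hAB, hBgood, hBcard⟩ := ih (k - (d - 1)) hlt' (insert v A) hphi'
      refine ⟨B, Finset.Subset.trans (Finset.subset_insert v A) hAB, hBgood, ?_⟩
      have hcard' : (insert v A).card = A.card + 1 := Finset.card_insert_of_notMem hvA
      have hd1 : (0:ℚ) < (d:ℚ) - 1 := by
        have : (2:ℚ) ≤ (d:ℚ) := by exact_mod_cast hd
        linarith
      have hcast : ((k - (d-1) : ℕ) : ℚ) = (k : ℚ) - ((d:ℚ) - 1) := by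
        have h1 : d - 1 ≤ k := by omega
        rw [Nat.cast_sub h1, Nat.cast_sub (by omega : 1 ≤ d)]
        norm_num
      rw [hcard', hcast] at hBcard
      have : ((k:ℚ) - ((d:ℚ)-1)) / ((d:ℚ)-1) = (k:ℚ)/((d:ℚ)-1) - 1 := by
        field_simp
      rw [this] at hBcard
      push_cast at hBcard ⊢
      linarith

end Stmt0Aux

theorem stmt0 {n : ℕ} (hn : 0 < n) (d : ℕ) (hd : 2 ≤ d) (π : Equiv.Perm (Fin n)) :
    ∃ P' : Finset (Fin n),
      headSet π ⊆ P' ∧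
      (∀ q q' : Fin n, q ∈ P'.image π → q' ∈ P'.image π → q < q' →
        (∀ x ∈ P'.image π, ¬(q < x ∧ x < q')) →
        (P'.filter (fun x => q ≤ x ∧ x < q')).card < 2 * d) ∧
      (P'.card : ℚ) ≤ (d * (headSet π).card : ℚ) / ((d : ℚ) - 1) := by
  classical
  set A₀ : Finset (Fin n) := (headSet π).image π with hA₀
  have hA₀card : A₀.card = (headSet π).card :=
    Finset.card_image_of_injective _ π.injective
  have hphi : Stmt0Aux.phi π d A₀ ≤ (headSet π).card := by
    calc Stmt0Aux.phi π d A₀ ≤ A₀.card := Stmt0Aux.phi_le_card π d A₀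
      _ = _ := hA₀card
  obtain ⟨B, hAB, hBgood, hBcard⟩ := Stmt0Aux.recMain π d hd ((headSet π).card) A₀ hphi
  refine ⟨B.image π.symm, ?_, ?_, ?_⟩
  · intro i hi
    have : π i ∈ B := hAB (Finset.mem_image_of_mem π hi)
    have h2 : π.symm (π i) ∈ B.image π.symm := Finset.mem_image_of_mem _ this
    rwa [Equiv.symm_apply_apply] at h2
  · have himg : (B.image π.symm).image π = B := by
      rw [Finset.image_image]
      have : (π : Fin n → Fin n) ∘ (π.symm : Fin n → Fin n) = id := by
        funext x; simp
      rw [this, Finset.image_id]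
    rw [himg]
    intro q q' hq hq' hlt hbet
    have := hBgood q q' hq hq' hlt hbet
    have heq : (B.image π.symm).filter (fun x => q ≤ x ∧ x < q')
        = ((B.image π.symm).filter (fun x => q ≤ x ∧ x < q')) := rfl
    exact this
  · have hcard : (B.image π.symm).card = B.card :=
      Finset.card_image_of_injective _ π.symm.injective
    rw [hcard]
    have hd1 : (0:ℚ) < (d:ℚ) - 1 := by
      have : (2:ℚ) ≤ (d:ℚ) := by exact_mod_cast hd
      linarith
    rw [hA₀card] at hBcard
    have heq2 : ((headSet π).card : ℚ) + ((headSet π).card : ℚ) / ((d:ℚ)-1)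
        = ((d : ℚ) * ((headSet π).card : ℚ)) / ((d : ℚ) - 1) := by
      field_simp
      ring
    calc (B.card : ℚ) ≤ ((headSet π).card : ℚ) + ((headSet π).card : ℚ) / ((d:ℚ)-1) := hBcard
      _ = _ := heq2
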